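/- For any regular binary game and any stationary probability measure P on Σ^∞, the limit lim_{n→∞} H_n/n exists, is finite, and equals lim_{n→∞} H_{1|n} (the limit of the nonincreasing sequence of one-step conditional generalized entropies). -/

import Mathlib

open MeasureTheory ENNReal Filter Topology

noncomputable section

/-- A regular binary game `(Σ, Γ, λ)` with `Σ = {0,1}` (encoded as `Bool`, bit `0 = false`),
prediction space `Γ = [0,1]` and loss function `λ : Σ × [0,1] → [0,∞]` that is continuous,
convex in the prediction, and admits a prediction of finite loss on both outcomes. -/
structure RegularGame where
  loss : Bool → ℝ → ℝ≥0∞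
  continuousOn : ∀ b, ContinuousOn (loss b) (Set.Icc 0 1)
  convex : ∀ b : Bool, ∀ γ₁ ∈ Set.Icc (0:ℝ) 1, ∀ γ₂ ∈ Set.Icc (0:ℝ) 1,
      ∀ t ∈ Set.Icc (0:ℝ) 1,
      loss b (t * γ₁ + (1 - t) * γ₂)
        ≤ ENNReal.ofReal t * loss b γ₁ + ENNReal.ofReal (1 - t) * loss b γ₂
  finite_pred : ∃ γ ∈ Set.Icc (0:ℝ) 1, loss false γ < ⊤ ∧ loss true γ < ⊤

/-- A prediction strategy: for each history length `i`, a map from `i`-bit histories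
to predictions in `[0,1]`. -/
def Strategy : Type := (i : ℕ) → (Fin i → Bool) → Set.Icc (0:ℝ) 1

/-- Cumulative loss of a strategy on the finite string `w`. -/
def strategyLoss (G : RegularGame) {n : ℕ} (w : Fin n → Bool) (S : Strategy) : ℝ≥0∞ :=
  ∑ i : Fin n, G.loss (w i)
    ((S i.val (fun j : Fin i.val => w ⟨j.val, j.isLt.trans i.isLt⟩) : Set.Icc (0:ℝ) 1) : ℝ)

/-- Cylinder set of the finite string `w` in `Σ^∞`. -/
def cyl {n : ℕ} (w : Fin n → Bool) : Set (ℕ → Bool) := {ω | ∀ i : Fin n, ω i.val = w i}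

/-- The `n`-step generalized entropy `H_n = inf_℘ Σ_{w ∈ Σ^n} P(w)·Loss(w,℘)`. -/
def Hn (G : RegularGame) (P : Measure (ℕ → Bool)) (n : ℕ) : ℝ≥0∞ :=
  ⨅ S : Strategy, ∑ w : Fin n → Bool, P (cyl w) * strategyLoss G w S

/-- The generalized conditional entropy
`H_{n|m} = inf_℘ Σ_{w∈Σ^m, x∈Σ^n} P(w·x) · Σ_{i<n} λ(x_i, ℘^{m+i}(w·x_0⋯x_{i−1}))`. -/
def Hcond (G : RegularGame) (P : Measure (ℕ → Bool)) (n m : ℕ) : ℝ≥0∞ :=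
  ⨅ S : Strategy, ∑ w : Fin m → Bool, ∑ x : Fin n → Bool,
    P (cyl (Fin.append w x)) *
      ∑ i : Fin n, G.loss (x i)
        ((S (m + i.val)
          (Fin.append w (fun j : Fin i.val => x ⟨j.val, j.isLt.trans i.isLt⟩)) : Set.Icc (0:ℝ) 1) : ℝ)

/-- The left shift on one-sided sequences. -/
def shiftN : (ℕ → Bool) → (ℕ → Bool) := fun ω n => ω (n + 1)

instance : Nonempty Strategy := ⟨fun _ _ => ⟨0, le_refl 0, zero_le_one⟩⟩

lemma measurable_cyl {n : ℕ} (w : Fin n → Bool) : MeasurableSet (cyl w) := by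
  have : cyl w = ⋂ i : Fin n, (fun ω : ℕ → Bool => ω i.val) ⁻¹' {w i} := by
    ext ω; simp [cyl]
  rw [this]
  exact MeasurableSet.iInter fun i =>
    (measurable_pi_apply i.val) (measurableSet_singleton _)

lemma measurable_shiftN : Measurable shiftN :=
  measurable_pi_lambda _ fun n => measurable_pi_apply (n + 1)

lemma mem_cyl_snoc {n : ℕ} (w : Fin n → Bool) (b : Bool) (ω : ℕ → Bool) :
    ω ∈ cyl (Fin.snoc w b) ↔ ω ∈ cyl w ∧ ω n = b := by
  constructor
  · intro h
    refine ⟨fun i => ?_, ?_⟩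
    · have := h i.castSucc; simpa using this
    · have := h (Fin.last n); simpa using this
  · rintro ⟨h1, h2⟩ i
    induction i using Fin.lastCases with
    | last => simpa using h2
    | cast j => simpa using h1 j

lemma mem_cyl_cons {n : ℕ} (w : Fin n → Bool) (b : Bool) (ω : ℕ → Bool) :
    ω ∈ cyl (Fin.cons b w) ↔ ω 0 = b ∧ ∀ i : Fin n, ω (i.val + 1) = w i := by
  constructor
  · intro h
    refine ⟨by simpa using h 0, fun i => ?_⟩
    have := h i.succ; simpa using this
  · rintro ⟨h1, h2⟩ i
    induction i using Fin.cases with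
    | zero => simpa using h1
    | succ j => simpa using h2 j

lemma cyl_snoc_split {n : ℕ} (P : Measure (ℕ → Bool)) (w : Fin n → Bool) :
    P (cyl w) = P (cyl (Fin.snoc w false)) + P (cyl (Fin.snoc w true)) := by
  have hunion : cyl w = cyl (Fin.snoc w false) ∪ cyl (Fin.snoc w true) := by
    ext ω
    simp only [Set.mem_union, mem_cyl_snoc]
    constructor
    · intro h; cases hb : ω n
      · exact Or.inl ⟨h, rfl⟩
      · exact Or.inr ⟨h, rfl⟩
    · rintro (⟨h, _⟩ | ⟨h, _⟩) <;> exact h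
  have hdisj : Disjoint (cyl (Fin.snoc w false)) (cyl (Fin.snoc w (true : Bool))) := by
    rw [Set.disjoint_left]
    intro ω h1 h2
    rw [mem_cyl_snoc] at h1 h2
    rw [h1.2] at h2; exact Bool.false_ne_true h2.2
  rw [hunion, measure_union hdisj (measurable_cyl _)]

lemma cyl_cons_split {n : ℕ} (P : Measure (ℕ → Bool)) (hstat : P.map shiftN = P)
    (w : Fin n → Bool) :
    P (cyl w) = P (cyl (Fin.cons false w)) + P (cyl (Fin.cons true w)) := by
  have hpre : shiftN ⁻¹' (cyl w) = cyl (Fin.cons false w) ∪ cyl (Fin.cons true w) := by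
    ext ω
    simp only [Set.mem_union, mem_cyl_cons, Set.mem_preimage]
    constructor
    · intro h
      cases hb : ω 0
      · exact Or.inl ⟨rfl, fun i => h i⟩
      · exact Or.inr ⟨rfl, fun i => h i⟩
    · rintro (⟨_, h⟩ | ⟨_, h⟩) <;> exact fun i => h i
  have hdisj : Disjoint (cyl (Fin.cons (false : Bool) w)) (cyl (Fin.cons (true : Bool) w)) := by
    rw [Set.disjoint_left]
    intro ω h1 h2
    rw [mem_cyl_cons] at h1 h2
    rw [h1.1] at h2; exact Bool.false_ne_true h2.1
  calc P (cyl w) = P.map shiftN (cyl w) := by rw [hstat]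
    _ = P (shiftN ⁻¹' (cyl w)) := Measure.map_apply measurable_shiftN (measurable_cyl w)
    _ = _ := by rw [hpre, measure_union hdisj (measurable_cyl _)]

-- sum reindexing via snoc
lemma sum_snoc {n : ℕ} (F : (Fin (n+1) → Bool) → ℝ≥0∞) :
    ∑ w : Fin (n+1) → Bool, F w
      = ∑ u : Fin n → Bool, ∑ a : Bool, F (Fin.snoc u a) := by
  rw [← (Fin.snocEquiv (fun _ => Bool)).sum_comp F, Fintype.sum_prod_type, Finset.sum_comm]
  rfl

lemma sum_cons {n : ℕ} (F : (Fin (n+1) → Bool) → ℝ≥0∞) :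
    ∑ w : Fin (n+1) → Bool, F w
      = ∑ b : Bool, ∑ u : Fin n → Bool, F (Fin.cons b u) := by
  rw [← (Fin.consEquiv (fun _ => Bool)).sum_comp F, Fintype.sum_prod_type]
  rfl

lemma snoc_lt {n : ℕ} (u : Fin n → Bool) (a : Bool) (j : ℕ) (h : j < n) (h' : j < n + 1) :
    (Fin.snoc u a : Fin (n+1) → Bool) ⟨j, h'⟩ = u ⟨j, h⟩ := by
  have : (⟨j, h'⟩ : Fin (n+1)) = Fin.castSucc ⟨j, h⟩ := by ext; simp
  rw [this, Fin.snoc_castSucc]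

lemma strategyLoss_snoc (G : RegularGame) {n : ℕ} (u : Fin n → Bool) (a : Bool) (S : Strategy) :
    strategyLoss G (Fin.snoc u a) S = strategyLoss G u S + G.loss a ((S n u : Set.Icc (0:ℝ) 1) : ℝ) := by
  unfold strategyLoss
  rw [Fin.sum_univ_castSucc]
  congr 1
  · refine Finset.sum_congr rfl fun i _ => ?_
    have h1 : (Fin.snoc u a : Fin (n+1) → Bool) i.castSucc = u i := by simp
    have h2 : (fun j : Fin (i.castSucc.val) =>
          (Fin.snoc u a : Fin (n+1) → Bool) ⟨j.val, j.isLt.trans i.castSucc.isLt⟩)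
        = (fun j : Fin i.val => u ⟨j.val, j.isLt.trans i.isLt⟩) := by
      funext j
      exact snoc_lt u a j.val (j.isLt.trans i.isLt) _
    rw [h1, h2]; rfl
  · have h1 : (Fin.snoc u a : Fin (n+1) → Bool) (Fin.last n) = a := by simp
    have h2 : (fun j : Fin ((Fin.last n).val) =>
          (Fin.snoc u a : Fin (n+1) → Bool) ⟨j.val, j.isLt.trans (Fin.last n).isLt⟩) = u := by
      funext j
      have := snoc_lt u a j.val j.isLt (j.isLt.trans (Fin.last n).isLt)
      simpa using this
    rw [h1, h2]; rfl

/-- one-step cost of prediction function `g` given histories of length `n`. -/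
def stepCost (G : RegularGame) (P : Measure (ℕ → Bool)) (n : ℕ)
    (g : (Fin n → Bool) → Set.Icc (0:ℝ) 1) : ℝ≥0∞ :=
  ∑ u : Fin n → Bool, ∑ a : Bool, P (cyl (Fin.snoc u a)) * G.loss a ((g u : Set.Icc (0:ℝ) 1) : ℝ)

def h1 (G : RegularGame) (P : Measure (ℕ → Bool)) (n : ℕ) : ℝ≥0∞ :=
  ⨅ S : Strategy, stepCost G P n (S n)

lemma strategyLoss_congr (G : RegularGame) {n : ℕ} (w : Fin n → Bool) (S S' : Strategy)
    (h : ∀ i < n, S i = S' i) : strategyLoss G w S = strategyLoss G w S' := by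
  unfold strategyLoss
  refine Finset.sum_congr rfl fun i _ => ?_
  rw [h i.val i.isLt]

lemma sum_loss_succ (G : RegularGame) (P : Measure (ℕ → Bool)) {n : ℕ} (S : Strategy) :
    ∑ w : Fin (n+1) → Bool, P (cyl w) * strategyLoss G w S
      = (∑ w : Fin n → Bool, P (cyl w) * strategyLoss G w S) + stepCost G P n (S n) := by
  rw [sum_snoc]
  have key : ∀ (u : Fin n → Bool) (a : Bool),
      P (cyl (Fin.snoc u a)) * strategyLoss G (Fin.snoc u a) S
        = P (cyl (Fin.snoc u a)) * strategyLoss G u S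
          + P (cyl (Fin.snoc u a)) * G.loss a ((S n u : Set.Icc (0:ℝ) 1) : ℝ) := by
    intro u a; rw [strategyLoss_snoc, mul_add]
  simp_rw [key, Finset.sum_add_distrib]
  congr 1
  refine Finset.sum_congr rfl fun u _ => ?_
  rw [← Finset.sum_mul]
  congr 1
  rw [cyl_snoc_split P u]
  simp [Fintype.sum_bool, add_comm]

lemma Hn_succ (G : RegularGame) (P : Measure (ℕ → Bool)) (n : ℕ) :
    Hn G P (n+1) = Hn G P n + h1 G P n := by
  rw [Hn, Hn, h1]
  simp_rw [sum_loss_succ G P]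
  refine (ENNReal.iInf_add_iInf fun S₁ S₂ => ?_).symm
  classical
  refine ⟨fun i => if i < n then S₁ i else S₂ i, ?_⟩
  have hA : ∑ w : Fin n → Bool, P (cyl w)
        * strategyLoss G w (fun i => if i < n then S₁ i else S₂ i)
      = ∑ w : Fin n → Bool, P (cyl w) * strategyLoss G w S₁ := by
    refine Finset.sum_congr rfl fun w _ => ?_
    rw [strategyLoss_congr G w (fun i => if i < n then S₁ i else S₂ i) S₁ (fun i hi => if_pos hi)]
  have hB : stepCost G P n ((fun i => if i < n then S₁ i else S₂ i) n) = stepCost G P n (S₂ n) := by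
    simp
  rw [hA, hB]

lemma Hn_zero (G : RegularGame) (P : Measure (ℕ → Bool)) : Hn G P 0 = 0 := by
  have : ∀ S : Strategy, ∑ w : Fin 0 → Bool, P (cyl w) * strategyLoss G w S = 0 := by
    intro S
    refine Finset.sum_eq_zero fun w _ => ?_
    have : strategyLoss G w S = 0 := by simp [strategyLoss]
    rw [this, mul_zero]
  rw [Hn]
  simp_rw [this]
  exact iInf_const

lemma Hn_eq_sum (G : RegularGame) (P : Measure (ℕ → Bool)) (n : ℕ) :
    Hn G P n = ∑ i ∈ Finset.range n, h1 G P i := by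
  induction n with
  | zero => simpa using Hn_zero G P
  | succ n ih => rw [Hn_succ, ih, Finset.sum_range_succ]

lemma h1_succ_le (G : RegularGame) (P : Measure (ℕ → Bool)) (hstat : P.map shiftN = P) (n : ℕ) :
    h1 G P (n+1) ≤ h1 G P n := by
  classical
  rw [h1, h1]
  refine le_iInf fun S => ?_
  set S' : Strategy := fun i v =>
    if h : n + 1 ≤ i then S n (fun j : Fin n => v ⟨j.val + 1, by omega⟩)
    else ⟨0, le_refl 0, zero_le_one⟩ with hS'
  refine iInf_le_of_le S' (le_of_eq ?_)
  have hS'app : ∀ v : Fin (n+1) → Bool,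
      S' (n+1) v = S n (fun j : Fin n => v ⟨j.val + 1, by omega⟩) := by
    intro v; rw [hS']; simp
  rw [stepCost, stepCost]
  rw [sum_cons (fun v => ∑ a : Bool, P (cyl (Fin.snoc v a)) * G.loss a ((S' (n+1) v : Set.Icc (0:ℝ) 1) : ℝ))]
  have key : ∀ (b : Bool) (u : Fin n → Bool) (a : Bool),
      P (cyl (Fin.snoc (Fin.cons b u) a)) * G.loss a ((S' (n+1) (Fin.cons b u) : Set.Icc (0:ℝ) 1) : ℝ)
        = P (cyl (Fin.cons b (Fin.snoc u a))) * G.loss a ((S n u : Set.Icc (0:ℝ) 1) : ℝ) := by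
    intro b u a
    have h1 : (Fin.snoc (Fin.cons b u) a : Fin (n+2) → Bool) = Fin.cons b (Fin.snoc u a) :=
      (Fin.cons_snoc_eq_snoc_cons b u a).symm
    have harg : (fun j : Fin n => (Fin.cons b u : Fin (n+1) → Bool) ⟨j.val + 1, by omega⟩) = u := by
      funext j
      have hj : (⟨j.val + 1, by omega⟩ : Fin (n+1)) = Fin.succ j := by ext; simp
      rw [hj, Fin.cons_succ]
    have h2 : S' (n+1) (Fin.cons b u) = S n u := by
      rw [hS'app, harg]
    rw [h1, h2]
  simp_rw [key]
  rw [Finset.sum_comm]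
  refine Finset.sum_congr rfl fun u _ => ?_
  rw [Finset.sum_comm]
  refine Finset.sum_congr rfl fun a _ => ?_
  rw [← Finset.sum_mul]
  congr 1
  rw [Fintype.sum_bool, cyl_cons_split P hstat (Fin.snoc u a), add_comm]

lemma h1_lt_top (G : RegularGame) (P : Measure (ℕ → Bool)) [IsProbabilityMeasure P] (n : ℕ) :
    h1 G P n < ⊤ := by
  obtain ⟨γ, hγ, hf, ht⟩ := G.finite_pred
  have hle : h1 G P n ≤ stepCost G P n (fun _ => ⟨γ, hγ⟩) :=
    iInf_le_of_le (fun _ _ => ⟨γ, hγ⟩) (le_of_eq rfl)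
  refine lt_of_le_of_lt hle ?_
  rw [stepCost]
  refine ENNReal.sum_lt_top.mpr fun u _ => ?_
  refine ENNReal.sum_lt_top.mpr fun a _ => ?_
  refine ENNReal.mul_lt_top (measure_lt_top P _) ?_
  cases a
  · exact hf
  · exact ht

lemma append_nil' {n : ℕ} (w : Fin n → Bool) (g : Fin 0 → Bool) :
    (Fin.append w g : Fin (n+0) → Bool) = w := by
  have hg : g = Fin.elim0 := funext fun j => j.elim0
  rw [hg, Fin.append_elim0]
  funext j
  rfl

lemma Hcond_eq_h1 (G : RegularGame) (P : Measure (ℕ → Bool)) (n : ℕ) :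
    Hcond G P 1 n = h1 G P n := by
  rw [Hcond, h1]
  refine iInf_congr fun S => ?_
  rw [stepCost]
  refine Finset.sum_congr rfl fun w _ => ?_
  have key : ∀ x : Fin 1 → Bool,
      (∑ i : Fin 1, G.loss (x i)
        ((S (n + i.val)
          (Fin.append w (fun j : Fin i.val => x ⟨j.val, j.isLt.trans i.isLt⟩)) : Set.Icc (0:ℝ) 1) : ℝ))
        = G.loss (x 0) ((S n w : Set.Icc (0:ℝ) 1) : ℝ) := by
    intro x
    rw [Fin.sum_univ_one]
    show G.loss (x 0) ((S n (Fin.append w (fun j : Fin 0 => x ⟨j.val, by omega⟩)) : Set.Icc (0:ℝ) 1) : ℝ) = _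
    rw [append_nil' w]
  simp_rw [key]
  rw [← (Equiv.funUnique (Fin 1) Bool).symm.sum_comp
    (fun x : Fin 1 → Bool => P (cyl (Fin.append w x)) * G.loss (x 0) ((S n w : Set.Icc (0:ℝ) 1) : ℝ))]
  refine Finset.sum_congr rfl fun a _ => ?_
  have : Fin.append w ((Equiv.funUnique (Fin 1) Bool).symm a) = Fin.snoc w a := by
    rw [Fin.append_right_eq_snoc]
    rfl
  rw [this]
  rfl

/-- **Existence of the generalized entropy rate.** For any regular binary game and any
stationary probability measure `P` on `Σ^∞`, the limit `lim_{n→∞} H_n / n` exists, is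
finite, and coincides with `lim_{n→∞} H_{1|n}`, the limit of the (nonincreasing)
one-step conditional generalized entropies. -/
theorem generalized_entropy_rate_exists
    (G : RegularGame) (P : Measure (ℕ → Bool)) [IsProbabilityMeasure P]
    (hstat : P.map shiftN = P) :
    ∃ H : ℝ≥0∞, H ≠ ⊤ ∧
      Tendsto (fun n : ℕ => Hn G P n / (n : ℝ≥0∞)) atTop (𝓝 H) ∧
      Tendsto (fun n : ℕ => Hcond G P 1 n) atTop (𝓝 H) := by
  have hanti : Antitone (fun n => h1 G P n) :=
    antitone_nat_of_succ_le (fun n => h1_succ_le G P hstat n)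
  have hlim : Tendsto (fun n => h1 G P n) atTop (𝓝 (⨅ n, h1 G P n)) :=
    tendsto_atTop_iInf hanti
  set H := ⨅ n, h1 G P n with hH
  have hHtop : H ≠ ⊤ := ((iInf_le (fun n => h1 G P n) 0).trans_lt (h1_lt_top G P 0)).ne
  have hfin : ∀ n, h1 G P n ≠ ⊤ := fun n => (h1_lt_top G P n).ne
  refine ⟨H, hHtop, ?_, ?_⟩
  · have hreal : Tendsto (fun n => (h1 G P n).toReal) atTop (𝓝 H.toReal) :=
      (ENNReal.tendsto_toReal hHtop).comp hlim
    have hces := hreal.cesaro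
    have hof : Tendsto
        (fun n : ℕ => ENNReal.ofReal (((n : ℝ)⁻¹) * ∑ i ∈ Finset.range n, (h1 G P i).toReal))
        atTop (𝓝 (ENNReal.ofReal H.toReal)) :=
      (ENNReal.continuous_ofReal.tendsto _).comp hces
    rw [ENNReal.ofReal_toReal hHtop] at hof
    refine hof.congr' ?_
    filter_upwards [eventually_ge_atTop 1] with n hn
    have hnpos : (0:ℝ) < (n : ℝ) := by exact_mod_cast hn
    rw [Hn_eq_sum]
    have hsum : ∑ i ∈ Finset.range n, h1 G P i
        = ENNReal.ofReal (∑ i ∈ Finset.range n, (h1 G P i).toReal) := by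
      rw [ENNReal.ofReal_sum_of_nonneg (fun i _ => ENNReal.toReal_nonneg)]
      exact Finset.sum_congr rfl fun i _ => (ENNReal.ofReal_toReal (hfin i)).symm
    rw [hsum, ENNReal.ofReal_mul (by positivity), ENNReal.ofReal_inv_of_pos hnpos,
      ENNReal.ofReal_natCast, ENNReal.div_eq_inv_mul]
  · have : (fun n : ℕ => Hcond G P 1 n) = fun n => h1 G P n :=
      funext fun n => Hcond_eq_h1 G P n
    rw [this]
    exact hlim
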